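/- Let I be a closed bounded interval of length |I|, let x₁,…,x_n ∈ ℝ, and 0 < η < 1. Set ε = η|I|/(2n). Then there exists y ∈ I with |y − xᵢ| > ε for all i, such that ∑_{i=1}^{n} ln(|xᵢ − y| − ε) ≥ n · ln(|I|(1−η)/(2e)). -/

import Mathlib

open MeasureTheory Set Real

lemma stmt10_aux (E : Set ℝ) (hE : MeasurableSet E) (p ε c : ℝ) (hε : 0 < ε) (hc : 0 < c)
    (hEp : ∀ y ∈ E, ε < |p - y|) :
    Integrable (fun y => max (Real.log c - Real.log (|p - y| - ε)) 0) (volume.restrict E) ∧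
      ∫ y in E, max (Real.log c - Real.log (|p - y| - ε)) 0 ≤ 2 * c := by
  set φ : ℝ → ℝ := fun y => max (Real.log c - Real.log (|p - y| - ε)) 0 with hφdef
  have hφm : Measurable φ := by
    apply Measurable.max _ measurable_const
    exact measurable_const.sub (Real.measurable_log.comp
      (((continuous_const.sub continuous_id).abs.sub continuous_const).measurable))
  have hφnn : ∀ y, 0 ≤ φ y := fun y => le_max_right _ _
  have key : ∫⁻ y, ENNReal.ofReal (φ y) ∂(volume.restrict E)
      = ∫⁻ t in Ioi (0:ℝ), (volume.restrict E) {y | t < φ y} :=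
    lintegral_eq_lintegral_meas_lt _ (Filter.Eventually.of_forall hφnn)
      hφm.aemeasurable
  have hbound : ∀ t ∈ Ioi (0:ℝ),
      (volume.restrict E) {y | t < φ y} ≤ ENNReal.ofReal (2 * c * Real.exp (-t)) := by
    intro t ht
    have ht0 : 0 < t := ht
    set r := c * Real.exp (-t) with hrdef
    have hr0 : 0 < r := mul_pos hc (Real.exp_pos _)
    have hMs : MeasurableSet {y : ℝ | t < φ y} := measurableSet_lt measurable_const hφm
    rw [Measure.restrict_apply hMs]
    have hsub : {y : ℝ | t < φ y} ∩ E ⊆ Ioo (p - ε - r) (p - ε) ∪ Ioo (p + ε) (p + ε + r) := by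
      rintro y ⟨hty, hyE⟩
      have h1 : ε < |p - y| := hEp y hyE
      have hty' : t < Real.log c - Real.log (|p - y| - ε) := by
        have hty2 : t < max (Real.log c - Real.log (|p - y| - ε)) 0 := hty
        rcases max_cases (Real.log c - Real.log (|p - y| - ε)) 0 with ⟨h, _⟩ | ⟨h, _⟩ <;>
          rw [h] at hty2
        · exact hty2
        · linarith
      have hu : 0 < |p - y| - ε := by linarith
      have hlt : |p - y| - ε < r := by
        calc |p - y| - ε = Real.exp (Real.log (|p - y| - ε)) := (Real.exp_log hu).symm
          _ < Real.exp (Real.log c + (-t)) := by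
              apply Real.exp_lt_exp.2; linarith
          _ = r := by rw [Real.exp_add, Real.exp_log hc]
      rcases le_or_gt y p with hyp | hyp
      · left
        have habs : |p - y| = p - y := abs_of_nonneg (by linarith)
        rw [habs] at h1 hlt
        constructor <;> [linarith; linarith]
      · right
        have habs : |p - y| = y - p := by rw [abs_sub_comm]; exact abs_of_nonneg (by linarith)
        rw [habs] at h1 hlt
        constructor <;> [linarith; linarith]
    calc volume ({y : ℝ | t < φ y} ∩ E)
        ≤ volume (Ioo (p - ε - r) (p - ε) ∪ Ioo (p + ε) (p + ε + r)) := measure_mono hsub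
      _ ≤ volume (Ioo (p - ε - r) (p - ε)) + volume (Ioo (p + ε) (p + ε + r)) :=
          measure_union_le _ _
      _ = ENNReal.ofReal r + ENNReal.ofReal r := by
          rw [Real.volume_Ioo, Real.volume_Ioo]; ring_nf
      _ = ENNReal.ofReal (2 * c * Real.exp (-t)) := by
          rw [← ENNReal.ofReal_add hr0.le hr0.le, hrdef]; ring_nf
  have hrhs : ∫⁻ t in Ioi (0:ℝ), ENNReal.ofReal (2 * c * Real.exp (-t))
      = ENNReal.ofReal (2 * c) := by
    have hInt : IntegrableOn (fun t : ℝ => 2 * c * Real.exp (-t)) (Ioi 0) := by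
      have := exp_neg_integrableOn_Ioi 0 (one_pos)
      simp only [neg_mul, one_mul] at this
      exact this.const_mul (2 * c)
    rw [← ofReal_integral_eq_lintegral_ofReal hInt
      (Filter.Eventually.of_forall fun t => by positivity)]
    congr 1
    rw [MeasureTheory.integral_const_mul, integral_exp_neg_Ioi_zero, mul_one]
  have hfin : ∫⁻ y, ENNReal.ofReal (φ y) ∂(volume.restrict E) ≤ ENNReal.ofReal (2 * c) := by
    rw [key, ← hrhs]
    exact setLIntegral_mono (by fun_prop) hbound
  have hφint : Integrable φ (volume.restrict E) := by
    rw [← lintegral_ofReal_ne_top_iff_integrable hφm.aestronglyMeasurable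
      (Filter.Eventually.of_forall hφnn)]
    exact (hfin.trans_lt ENNReal.ofReal_lt_top).ne
  refine ⟨hφint, ?_⟩
  have := ofReal_integral_eq_lintegral_ofReal hφint (Filter.Eventually.of_forall hφnn)
  rw [← this] at hfin
  exact (ENNReal.ofReal_le_ofReal_iff (by positivity)).1 hfin
open MeasureTheory Set Real in
/-- Given a closed bounded interval [a,b], points x₁,…,x_n and 0 < η < 1, with
ε = η(b−a)/(2n), there is y ∈ [a,b] at distance greater than ε from all xᵢ with
∑ᵢ ln(|xᵢ − y| − ε) ≥ n ln((b−a)(1−η)/(2e)). -/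
theorem stmt10 (a b : ℝ) (hab : a < b) (n : ℕ) (hn : 0 < n) (x : Fin n → ℝ)
    (η : ℝ) (hη : 0 < η) (hη1 : η < 1) :
    ∃ y ∈ Set.Icc a b, (∀ i, η * (b - a) / (2 * n) < |y - x i|) ∧
      (n : ℝ) * Real.log ((b - a) * (1 - η) / (2 * Real.exp 1)) ≤
        ∑ i, Real.log (|x i - y| - η * (b - a) / (2 * n)) := by
  by_contra hcon
  push_neg at hcon
  have hba : 0 < b - a := sub_pos.2 hab
  have hn' : (0:ℝ) < n := Nat.cast_pos.2 hn
  set ε : ℝ := η * (b - a) / (2 * n) with hεdef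
  have hε : 0 < ε := by positivity
  set L : ℝ := (b - a) * (1 - η) with hLdef
  have hL : 0 < L := by
    apply mul_pos hba; linarith
  set E : Set ℝ := Set.Icc a b \ ⋃ i, Metric.closedBall (x i) ε with hEdef
  have hEm : MeasurableSet E :=
    measurableSet_Icc.diff (MeasurableSet.iUnion fun i => measurableSet_closedBall)
  have hEdist : ∀ y ∈ E, ∀ i, ε < |x i - y| := by
    intro y hy i
    have h1 : y ∉ Metric.closedBall (x i) ε := fun h => hy.2 (Set.mem_iUnion.2 ⟨i, h⟩)
    rw [Metric.mem_closedBall, not_le, Real.dist_eq, abs_sub_comm] at h1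
    exact h1
  -- measure lower bound
  have hU : volume (⋃ i, Metric.closedBall (x i) ε) ≤ ENNReal.ofReal (η * (b - a)) := by
    calc volume (⋃ i, Metric.closedBall (x i) ε)
        ≤ ∑ i : Fin n, volume (Metric.closedBall (x i) ε) := measure_iUnion_fintype_le _ _
      _ = ∑ _i : Fin n, ENNReal.ofReal (2 * ε) := by
          simp [Real.volume_closedBall]
      _ = (n : ENNReal) * ENNReal.ofReal (2 * ε) := by
          rw [Finset.sum_const, Finset.card_univ, Fintype.card_fin, nsmul_eq_mul]
      _ = ENNReal.ofReal ((n : ℝ) * (2 * ε)) := by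
          conv_rhs => rw [ENNReal.ofReal_mul (by positivity : (0:ℝ) ≤ (n:ℝ)),
            ENNReal.ofReal_natCast]
      _ = ENNReal.ofReal (η * (b - a)) := by
          congr 1
          rw [hεdef]
          field_simp
  have hEvol : ENNReal.ofReal L ≤ volume E := by
    have hIccsub : Set.Icc a b ⊆ E ∪ ⋃ i, Metric.closedBall (x i) ε := by
      intro y hy
      by_cases h : y ∈ ⋃ i, Metric.closedBall (x i) ε
      · exact Or.inr h
      · exact Or.inl ⟨hy, h⟩
    have h2 : volume (Set.Icc a b) ≤ volume E + ENNReal.ofReal (η * (b - a)) :=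
      le_trans (measure_mono hIccsub) (le_trans (measure_union_le _ _) (by gcongr))
    rw [Real.volume_Icc] at h2
    have h3 : ENNReal.ofReal (b - a)
        = ENNReal.ofReal L + ENNReal.ofReal (η * (b - a)) := by
      rw [← ENNReal.ofReal_add hL.le (by positivity)]
      congr 1; rw [hLdef]; ring
    rw [h3] at h2
    exact (ENNReal.add_le_add_iff_right ENNReal.ofReal_ne_top).1 h2
  have hEfin : volume E ≠ ⊤ := by
    apply ne_top_of_le_ne_top _ (measure_mono Set.diff_subset)
    rw [Real.volume_Icc]; exact ENNReal.ofReal_ne_top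
  set m : ℝ := (volume E).toReal with hmdef
  have hLm : L ≤ m := (ENNReal.ofReal_le_iff_le_toReal hEfin).1 hEvol
  have hm0 : 0 < m := lt_of_lt_of_le hL hLm
  set ν : Measure ℝ := volume.restrict E with hνdef
  have hνuniv : ν Set.univ = volume E := by rw [hνdef, Measure.restrict_apply_univ]
  haveI hνfin : IsFiniteMeasure ν := ⟨by rw [hνuniv]; exact hEfin.lt_top⟩
  set c : ℝ := m / 2 with hcdef
  have hc : 0 < c := by positivity
  -- per index data
  set g : Fin n → ℝ → ℝ := fun i y => Real.log (|x i - y| - ε) with hgdef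
  have hgm : ∀ i, Measurable (g i) := fun i =>
    Real.measurable_log.comp
      (((continuous_const.sub continuous_id).abs.sub continuous_const).measurable)
  set φ : Fin n → ℝ → ℝ := fun i y => max (Real.log c - Real.log (|x i - y| - ε)) 0 with hφdef
  have hφaux : ∀ i, Integrable (φ i) ν ∧ ∫ y in E, φ i y ≤ 2 * c := fun i =>
    stmt10_aux E hEm (x i) ε c hε hc (fun y hy => hEdist y hy i)
  have hφint : ∀ i, Integrable (φ i) ν := fun i => (hφaux i).1
  have hglow : ∀ i y, Real.log c - φ i y ≤ g i y := by
    intro i y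
    have := le_max_left (Real.log c - Real.log (|x i - y| - ε)) 0
    simp only [hφdef, hgdef]
    linarith
  set B : Fin n → ℝ := fun i => |x i| + |a| + |b| + 1 with hBdef
  have hgup : ∀ i, ∀ y ∈ E, g i y ≤ Real.log (B i) := by
    intro i y hy
    have h1 : ε < |x i - y| := hEdist y hy i
    have hya : a ≤ y := hy.1.1
    have hyb : y ≤ b := hy.1.2
    have hyabs : |y| ≤ |a| + |b| := by
      rcases abs_cases y with ⟨h, _⟩ | ⟨h, _⟩
      · rw [h]
        have hb1 : b ≤ |b| := le_abs_self b
        have ha1 : (0:ℝ) ≤ |a| := abs_nonneg a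
        linarith
      · rw [h]
        have : -a ≤ |a| := neg_le_abs a
        have hb1 : (0:ℝ) ≤ |b| := abs_nonneg b
        linarith
    apply Real.log_le_log (by linarith)
    have h2 : |x i - y| ≤ |x i| + |y| := by
      have := abs_add_le (x i) (-y)
      simpa [sub_eq_add_neg] using this
    rw [hBdef]
    simp only
    linarith
  have hgint : ∀ i, Integrable (g i) ν := by
    intro i
    have hbint : Integrable (fun y => |Real.log c| + (φ i y + |Real.log (B i)|)) ν :=
      (integrable_const _).add ((hφint i).add (integrable_const _))
    apply Integrable.mono' hbint ((hgm i).aestronglyMeasurable)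
    rw [hνdef, ae_restrict_iff' hEm]
    apply Filter.Eventually.of_forall
    intro y hy
    have h1 := hglow i y
    have h2 := hgup i y hy
    have h3 : 0 ≤ φ i y := le_max_right _ _
    rw [Real.norm_eq_abs, abs_le]
    have h4 : -|Real.log c| ≤ Real.log c := neg_abs_le _
    have h5 : Real.log (B i) ≤ |Real.log (B i)| := le_abs_self _
    have h6 : (0:ℝ) ≤ |Real.log c| := abs_nonneg _
    have h7 : (0:ℝ) ≤ |Real.log (B i)| := abs_nonneg _
    constructor
    · linarith
    · linarith
  have hgbnd : ∀ i, m * Real.log c - 2 * c ≤ ∫ y in E, g i y := by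
    intro i
    have h1 : ∫ y in E, (Real.log c - φ i y) ≤ ∫ y in E, g i y := by
      apply integral_mono ((integrable_const _).sub (hφint i)) (hgint i)
      intro y; exact hglow i y
    have h2 : ∫ y in E, (Real.log c - φ i y)
        = m * Real.log c - ∫ y in E, φ i y := by
      rw [integral_sub (integrable_const _) (hφint i), setIntegral_const, smul_eq_mul, measureReal_def]
    have h3 := (hφaux i).2
    rw [h2] at h1
    linarith
  set T : ℝ := (n : ℝ) * Real.log ((b - a) * (1 - η) / (2 * Real.exp 1)) with hTdef
  -- key scalar inequality
  have hkey : m * T ≤ (n:ℝ) * (m * Real.log c - 2 * c) := by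
    have he1 : (0:ℝ) < 2 * Real.exp 1 := by positivity
    have hlog1 : Real.log (L / (2 * Real.exp 1)) ≤ Real.log (m / (2 * Real.exp 1)) :=
      Real.log_le_log (by positivity) (by gcongr)
    have hlog2 : Real.log (m / (2 * Real.exp 1)) = Real.log c - 1 := by
      rw [hcdef, Real.log_div (by positivity) (by positivity),
        Real.log_div (by positivity) (by norm_num),
        Real.log_mul (by norm_num) (Real.exp_ne_zero 1), Real.log_exp]
      ring
    have h4 : Real.log ((b - a) * (1 - η) / (2 * Real.exp 1)) ≤ Real.log c - 1 := by
      rw [← hlog2]; exact hlog1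
    have h5 : m * Real.log ((b - a) * (1 - η) / (2 * Real.exp 1))
        ≤ m * (Real.log c - 1) := by
      exact mul_le_mul_of_nonneg_left h4 hm0.le
    have h6 : m * (Real.log c - 1) = m * Real.log c - 2 * c := by
      rw [hcdef]; ring
    rw [hTdef]
    calc m * ((n:ℝ) * Real.log ((b - a) * (1 - η) / (2 * Real.exp 1)))
        = (n:ℝ) * (m * Real.log ((b - a) * (1 - η) / (2 * Real.exp 1))) := by ring
      _ ≤ (n:ℝ) * (m * Real.log c - 2 * c) := by
          apply mul_le_mul_of_nonneg_left _ hn'.le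
          rw [← h6]; exact h5
  -- integral of the sum
  set G : ℝ → ℝ := fun y => ∑ i, g i y with hGdef
  have hGint : Integrable G ν := integrable_finset_sum _ (fun i _ => hgint i)
  have hGlb : m * T ≤ ∫ y in E, G y := by
    rw [hGdef]
    rw [integral_finset_sum _ (fun i _ => hgint i)]
    calc m * T ≤ (n:ℝ) * (m * Real.log c - 2 * c) := hkey
      _ = ∑ _i : Fin n, (m * Real.log c - 2 * c) := by
          rw [Finset.sum_const, Finset.card_univ, Fintype.card_fin, nsmul_eq_mul]
      _ ≤ ∑ i, ∫ y in E, g i y := Finset.sum_le_sum fun i _ => hgbnd i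
  -- contradiction
  have hGub : ∀ y ∈ E, G y < T := by
    intro y hy
    have h1 : ∀ i, ε < |y - x i| := by
      intro i; rw [abs_sub_comm]; exact hEdist y hy i
    exact hcon y hy.1 h1
  set F : ℝ → ℝ := fun y => T - G y with hFdef
  have hFint : Integrable F ν := (integrable_const _).sub hGint
  have hFnn : 0 ≤ᵐ[ν] F := by
    have h := (ae_restrict_iff' (μ := volume) (p := fun y => 0 ≤ F y) hEm).2
      (Filter.Eventually.of_forall fun y hy => le_of_lt (sub_pos.2 (hGub y hy)))
    rw [hνdef]
    exact h
  have hFpos : 0 < ∫ y, F y ∂ν := by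
    rw [integral_pos_iff_support_of_nonneg_ae hFnn hFint]
    have hsupp : E ⊆ Function.support F :=
      fun y hy => ne_of_gt (sub_pos.2 (hGub y hy))
    calc (0:ENNReal) < ENNReal.ofReal L := by simp [hL]
      _ ≤ volume E := hEvol
      _ = volume (Function.support F ∩ E) := by rw [Set.inter_eq_right.mpr hsupp]
      _ = ν (Function.support F) := by rw [hνdef, Measure.restrict_apply' hEm]
  have hFneg : ∫ y, F y ∂ν ≤ 0 := by
    rw [hFdef]
    have : ∫ y, (T - G y) ∂ν = m * T - ∫ y, G y ∂ν := by
      rw [integral_sub (integrable_const _) hGint, integral_const, measureReal_def, hνuniv, ← hmdef, smul_eq_mul]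
    rw [this]
    have := hGlb
    rw [hνdef] at *
    linarith [hGlb]
  linarith
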